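/- If all covariance matrices Σ_s equal a common Σ and the standardized variables Z_s = Σ^{−1/2}(X_s − μ_s) have the same distribution for all s, then the SEO forecast Ŷ_SEO(x,s) = α_F + β_Fᵀ(x − μ_s + μ̄) coincides with the averaged standardized forecast ᾱ° + β̄°ᵀ z_s where ᾱ° = Σ_i p_i α_i°, β̄° = Σ_i p_i β_i°, z_s = Σ^{−1/2}(x − μ_s); and the forecast satisfies demographic parity. -/

import Mathlib

open MeasureTheory Finset

/-- If all covariance matrices equal a common `Σ` and the standardized variables
`Z_s = Σ^{−1/2}(X_s − μ_s)` are identically distributed across banks, then the SEO forecast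
`α_F + β_Fᵀ(x − μ_s + μ̄)` coincides with the averaged standardized forecast
`ᾱ° + β̄°ᵀ z_s`, and the forecast satisfies demographic parity. -/
theorem stmt11
    {Ω : Type*} [MeasurableSpace Ω] (P : Measure Ω) [IsProbabilityMeasure P]
    (n d : ℕ) (p : Fin (n + 1) → ℝ) (hp : ∀ s, 0 < p s) (hpsum : ∑ s, p s = 1)
    (X : Fin (n + 1) → Ω → EuclideanSpace ℝ (Fin d)) (hX : ∀ s, Measurable (X s))
    (αb : Fin (n + 1) → ℝ) (βb μv : Fin (n + 1) → EuclideanSpace ℝ (Fin d))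
    -- `R` is the symmetric square root `Σ^{1/2}` of the common covariance matrix `Σ`
    (R : EuclideanSpace ℝ (Fin d) ≃ₗ[ℝ] EuclideanSpace ℝ (Fin d))
    (hRsym : ∀ v w : EuclideanSpace ℝ (Fin d), (inner ℝ (R v) w : ℝ) = inner ℝ v (R w))
    -- standardized variables, identically distributed across banks
    (Z : Fin (n + 1) → Ω → EuclideanSpace ℝ (Fin d))
    (hZ : ∀ s ω, Z s ω = R.symm (X s ω - μv s))
    (hZdist : ∀ s t, Measure.map (Z s) P = Measure.map (Z t) P)
    -- standardized coefficients
    (αo : Fin (n + 1) → ℝ) (hαo : ∀ s, αo s = αb s + (inner ℝ (βb s) (μv s) : ℝ))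
    (βo : Fin (n + 1) → EuclideanSpace ℝ (Fin d)) (hβo : ∀ s, βo s = R (βb s))
    (μbar : EuclideanSpace ℝ (Fin d)) (hμbar : μbar = ∑ s, p s • μv s)
    -- FEO coefficient and intercept (with common Σ, β_F = Σ_s p_s β_s)
    (βF : EuclideanSpace ℝ (Fin d)) (hβF : βF = ∑ s, p s • βb s)
    (EY : ℝ) (hEY : EY = ∑ s, p s * (αb s + (inner ℝ (βb s) (μv s) : ℝ)))
    (αF : ℝ) (hαF : αF = EY - (inner ℝ βF μbar : ℝ)) :
    -- the SEO forecast coincides with the averaged standardized forecast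
    (∀ (s : Fin (n + 1)) (x : EuclideanSpace ℝ (Fin d)),
      αF + (inner ℝ βF (x - μv s + μbar) : ℝ)
        = (∑ i, p i * αo i) + (inner ℝ (∑ i, p i • βo i) (R.symm (x - μv s)) : ℝ)) ∧
    -- demographic parity: the forecast has the same distribution for all banks
    (∀ s t : Fin (n + 1),
      Measure.map (fun ω => αF + (inner ℝ βF (X s ω - μv s + μbar) : ℝ)) P
        = Measure.map (fun ω => αF + (inner ℝ βF (X t ω - μv t + μbar) : ℝ)) P) := by

  constructor
  · intro s x
    have hRR : ∀ v : EuclideanSpace ℝ (Fin d), R (R.symm v) = v := fun v => R.apply_symm_apply v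
    have key : (inner ℝ (∑ i, p i • βo i) (R.symm (x - μv s)) : ℝ)
        = inner ℝ βF (x - μv s) := by
      rw [hβF]
      rw [sum_inner, sum_inner]
      refine Finset.sum_congr rfl fun i _ => ?_
      rw [hβo i, real_inner_smul_left, real_inner_smul_left, hRsym, hRR]
    have hα : (∑ i, p i * αo i) = EY := by
      rw [hEY]; exact Finset.sum_congr rfl fun i _ => by rw [hαo]
    rw [key, hα, hαF]
    rw [inner_add_right]
    ring
  · intro s t
    have hXZ : ∀ s ω, X s ω - μv s + μbar = R (Z s ω) + μbar := by
      intro s ω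
      rw [hZ s ω, R.apply_symm_apply]
    have hcomp : ∀ s, (fun ω => αF + (inner ℝ βF (X s ω - μv s + μbar) : ℝ))
        = (fun z : EuclideanSpace ℝ (Fin d) => αF + (inner ℝ βF (R z + μbar) : ℝ)) ∘ Z s := by
      intro s; funext ω; simp [Function.comp, hXZ s ω]
    have hg : Measurable (fun z : EuclideanSpace ℝ (Fin d) => αF + (inner ℝ βF (R z + μbar) : ℝ)) := by
      have hR : Continuous (R : EuclideanSpace ℝ (Fin d) → EuclideanSpace ℝ (Fin d)) :=
        R.toLinearMap.continuous_of_finiteDimensional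
      exact (continuous_const.add (continuous_const.inner ((hR.add continuous_const)))).measurable
    have hZm : ∀ s, Measurable (Z s) := by
      intro s
      have : Continuous (R.symm : EuclideanSpace ℝ (Fin d) → EuclideanSpace ℝ (Fin d)) :=
        R.symm.toLinearMap.continuous_of_finiteDimensional
      have hm : Measurable fun ω => R.symm (X s ω - μv s) :=
        this.measurable.comp ((hX s).sub measurable_const)
      simpa [funext (hZ s)] using hm
    rw [hcomp s, hcomp t, ← Measure.map_map hg (hZm s), ← Measure.map_map hg (hZm t), hZdist s t]
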